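/- Let (ω_j)_{j=1..D} be independent standard Gaussian random variables, ν_j, v_j real numbers, Z_j = ν_j + v_j ω_j, T = Σ_{j=1}^D Z_j², and Σ = Σ_{j=1}^D v_j⁴ + 2 Σ_{j=1}^D v_j² ν_j². Then for all x > 0, P(T − E[T] < −2√(Σx)) ≤ exp(−x). -/

import Mathlib

open MeasureTheory ProbabilityTheory Real
open scoped NNReal ENNReal

lemma csq_hasderiv (y : ℝ) (h1 : (0:ℝ) < 1 + y) :
    HasDerivAt (fun u : ℝ => Real.log (1+u) - u + u^2/2) ((1+y)⁻¹ - 1 + y) y := by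
  have hlog : HasDerivAt (fun u : ℝ => Real.log (1+u)) (1/(1+y)) y := by
    simpa using (((hasDerivAt_id y).const_add 1).log h1.ne')
  have := (hlog.sub (hasDerivAt_id y)).add ((hasDerivAt_pow 2 y).div_const 2)
  convert this using 1
  all_goals first | rfl | norm_num

lemma csq_sub_log_le {u : ℝ} (hu : 0 ≤ u) : u - Real.log (1+u) ≤ u^2/2 := by
  have key : MonotoneOn (fun u => Real.log (1+u) - u + u^2/2) (Set.Ici (0:ℝ)) := by
    apply monotoneOn_of_deriv_nonneg (convex_Ici 0)
    · apply ContinuousOn.add (ContinuousOn.sub ?_ continuousOn_id) (by fun_prop)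
      exact (continuousOn_const.add continuousOn_id).log (fun y hy => by
        simp only [Set.mem_Ici] at hy; show (1:ℝ) + y ≠ 0; positivity)
    · intro y hy
      simp only [interior_Ici, Set.mem_Ioi] at hy
      exact (csq_hasderiv y (by linarith)).differentiableAt.differentiableWithinAt
    · intro y hy
      simp only [interior_Ici, Set.mem_Ioi] at hy
      have h1 : (0:ℝ) < 1 + y := by linarith
      rw [(csq_hasderiv y h1).deriv]
      have heq : (1+y)⁻¹ - 1 + y = y^2/(1+y) := by field_simp; ring
      rw [heq]
      positivity
  have h0 := key (Set.self_mem_Ici) (Set.mem_Ici.mpr hu) hu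
  simp at h0
  linarith

lemma gauss_sq_mgf (c nu w : ℝ) (hc : 0 ≤ c) :
    ∫ y, Real.exp (-(c * (nu + w * y)^2)) ∂(gaussianReal 0 1)
      = Real.exp (-(c*nu^2)/(1+2*c*w^2)) / Real.sqrt (1+2*c*w^2) := by
  set a : ℝ := c * w^2 + 1/2 with ha
  have hapos : 0 < a := by positivity
  have h2a : 1 + 2*c*w^2 = 2*a := by rw [ha]; ring
  -- express as Lebesgue integral with density
  rw [gaussianReal_of_var_ne_zero 0 one_ne_zero]
  have hpdf : gaussianPDF 0 1 = fun y => ((Real.toNNReal (gaussianPDFReal 0 1 y) : ℝ≥0) : ℝ≥0∞) := by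
    funext y; rfl
  rw [hpdf, integral_withDensity_eq_integral_smul
    ((measurable_gaussianPDFReal 0 1).real_toNNReal)]
  have hint : ∀ y : ℝ, (Real.toNNReal (gaussianPDFReal 0 1 y) : ℝ≥0) •
      Real.exp (-(c * (nu + w * y)^2))
      = Real.exp (-(c*nu^2)/(2*a)) * Real.exp (-(a * (y + c*nu*w/a)^2)) * (Real.sqrt (2*π))⁻¹ := by
    intro y
    have hpdfval : gaussianPDFReal 0 1 y = (Real.sqrt (2*π))⁻¹ * Real.exp (-(y^2/2)) := by
      rw [gaussianPDFReal_def]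
      norm_num
      rw [neg_div]
      exact Or.inl rfl
    rw [NNReal.smul_def, smul_eq_mul, Real.coe_toNNReal _ (gaussianPDFReal_nonneg 0 1 y), hpdfval]
    have hcomb : Real.exp (-(y^2/2)) * Real.exp (-(c * (nu + w * y)^2))
        = Real.exp (-(c*nu^2)/(2*a)) * Real.exp (-(a * (y + c*nu*w/a)^2)) := by
      rw [← Real.exp_add, ← Real.exp_add]
      congr 1
      field_simp
      ring
    rw [mul_assoc, hcomb]
    ring
  simp_rw [hint]
  rw [integral_mul_const, integral_const_mul]
  rw [integral_add_right_eq_self (fun y => Real.exp (-(a * y^2))) (c*nu*w/a)]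
  have hg : ∫ y : ℝ, Real.exp (-(a * y^2)) = Real.sqrt (π / a) := by
    simpa using integral_gaussian a
  rw [hg, h2a]
  have hsq : Real.sqrt (π/a) * (Real.sqrt (2*π))⁻¹ = (Real.sqrt (2*a))⁻¹ := by
    rw [← Real.sqrt_inv (2*π), ← Real.sqrt_mul (by positivity)]
    congr 1
    rw [eq_comm, inv_eq_iff_eq_inv, ← Real.sqrt_inv]
    congr 1
    field_simp
  rw [mul_assoc, hsq]
  rw [div_eq_mul_inv, div_eq_mul_inv]

lemma csq_factor_bound (c nu w : ℝ) (hc : 0 ≤ c) :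
    Real.exp (-(c*nu^2)/(1+2*c*w^2)) / Real.sqrt (1+2*c*w^2)
      ≤ Real.exp (-(c*(nu^2+w^2)) + c^2*(w^4+2*w^2*nu^2)) := by
  set u : ℝ := 2*c*w^2 with hu
  have hu0 : 0 ≤ u := by positivity
  have h1u : (0:ℝ) < 1 + u := by linarith
  have hs1 : Real.sqrt (1+2*c*w^2) = Real.exp (Real.log (1+u) / 2) := by
    rw [← Real.log_sqrt h1u.le, Real.exp_log (Real.sqrt_pos.mpr h1u)]
  rw [hs1, div_eq_mul_inv, ← Real.exp_neg, ← Real.exp_add]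
  apply Real.exp_le_exp.mpr
  have hlog := csq_sub_log_le hu0
  have hfrac : c*nu^2 - c*nu^2*u ≤ (c*nu^2)/(1+u) := by
    rw [le_div_iff₀ h1u]
    nlinarith [mul_nonneg (mul_nonneg hc (sq_nonneg nu)) (mul_nonneg hu0 hu0)]
  have hu2 : u^2 = 4*c^2*w^4 := by rw [hu]; ring
  have huv : c*nu^2*u = 2*c^2*w^2*nu^2 := by rw [hu]; ring
  have h2 : -(c*nu^2)/(1+u) ≤ -(c*nu^2) + 2*c^2*w^2*nu^2 := by
    rw [neg_div]
    linarith
  have h3 : -(Real.log (1+u)/2) ≤ -(c*w^2) + c^2*w^4 := by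
    nlinarith
  calc -(c*nu^2)/(1+2*c*w^2) + -(Real.log (1+u)/2)
      = -(c*nu^2)/(1+u) + -(Real.log (1+u)/2) := by rw [hu]
    _ ≤ (-(c*nu^2) + 2*c^2*w^2*nu^2) + (-(c*w^2) + c^2*w^4) := by linarith
    _ = -(c*(nu^2+w^2)) + c^2*(w^4+2*w^2*nu^2) := by ring

theorem chi_square_lower_deviation
    {Ω : Type*} [MeasureSpace Ω] (μ : Measure Ω) [IsProbabilityMeasure μ]
    (D : ℕ) (hD : 0 < D) (ω : Fin D → Ω → ℝ) (ν v : Fin D → ℝ)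
    (hindep : iIndepFun ω μ)
    (hlaw : ∀ j, Measure.map (ω j) μ = gaussianReal 0 1)
    (T : Ω → ℝ) (hT : ∀ a, T a = ∑ j, (ν j + v j * ω j a) ^ 2)
    (S : ℝ) (hS : S = ∑ j, (v j) ^ 4 + 2 * ∑ j, (v j) ^ 2 * (ν j) ^ 2)
    (x : ℝ) (hx : 0 < x) :
    μ {a | T a - (∑ j, ((ν j) ^ 2 + (v j) ^ 2)) < -(2 * Real.sqrt (S * x))} ≤
      ENNReal.ofReal (Real.exp (-x)) := by
  classical
  have hSnn : 0 ≤ S := by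
    rw [hS]
    have h1 : (0:ℝ) ≤ ∑ j, (v j)^4 := Finset.sum_nonneg fun j _ => by positivity
    have h2 : (0:ℝ) ≤ ∑ j, (v j)^2 * (ν j)^2 := Finset.sum_nonneg fun j _ => by positivity
    linarith
  by_cases hS0 : S = 0
  · -- degenerate case: all v j = 0
    have hv : ∀ j, v j = 0 := by
      intro j
      have h1 : ∑ j, (v j)^4 = 0 := by
        have h2 : (0:ℝ) ≤ ∑ j, (v j)^4 := Finset.sum_nonneg fun j _ => by positivity
        have h3 : (0:ℝ) ≤ ∑ j, (v j)^2 * (ν j)^2 := Finset.sum_nonneg fun j _ => by positivity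
        rw [hS] at hS0
        linarith
      have h4 := (Finset.sum_eq_zero_iff_of_nonneg
        (fun j _ => by positivity : ∀ j ∈ Finset.univ, (0:ℝ) ≤ (v j)^4)).mp h1 j
        (Finset.mem_univ j)
      exact pow_eq_zero_iff (by norm_num) |>.mp h4
    have hset : {a | T a - (∑ j, ((ν j) ^ 2 + (v j) ^ 2)) < -(2 * Real.sqrt (S * x))} = ∅ := by
      ext a
      simp only [Set.mem_setOf_eq, Set.mem_empty_iff_false, iff_false, not_lt]
      rw [hT a, hS0]
      simp [hv]
    rw [hset]
    simp
  · have hSpos : 0 < S := lt_of_le_of_ne hSnn (Ne.symm hS0)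
    set lam := Real.sqrt (x / S) with hlamdef
    have hlam : 0 < lam := Real.sqrt_pos.mpr (by positivity)
    -- measurable modifications
    have haem : ∀ j, AEMeasurable (ω j) μ := by
      intro j
      by_contra h
      have h0 := hlaw j
      rw [Measure.map_of_not_aemeasurable h] at h0
      exact (IsProbabilityMeasure.ne_zero (gaussianReal 0 1)) h0.symm
    set ω' : Fin D → Ω → ℝ := fun j => (haem j).mk _ with hω'def
    have hmeas' : ∀ j, Measurable (ω' j) := fun j => (haem j).measurable_mk
    have heq : ∀ j, ω j =ᵐ[μ] ω' j := fun j => (haem j).ae_eq_mk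
    have hlaw' : ∀ j, Measure.map (ω' j) μ = gaussianReal 0 1 := fun j => by
      rw [← Measure.map_congr (heq j), hlaw j]
    have hindep' : iIndepFun ω' μ := by
      rw [iIndepFun_iff_measure_inter_preimage_eq_mul] at hindep ⊢
      intro s sets hsets
      have hall : ∀ᵐ a ∂μ, ∀ j : Fin D, ω j a = ω' j a := ae_all_iff.mpr heq
      have h1 : μ (⋂ i ∈ s, ω' i ⁻¹' sets i) = μ (⋂ i ∈ s, ω i ⁻¹' sets i) := by
        apply measure_congr
        rw [Filter.eventuallyEq_set]
        filter_upwards [hall] with a ha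
        simp only [Set.mem_iInter, Set.mem_preimage]
        exact forall_congr' fun j => forall_congr' fun _ => by rw [ha j]
      have h2 : ∀ i, μ (ω' i ⁻¹' sets i) = μ (ω i ⁻¹' sets i) := by
        intro i
        apply measure_congr
        rw [Filter.eventuallyEq_set]
        filter_upwards [hall] with a ha
        simp only [Set.mem_preimage, ha i]
      rw [h1]
      rw [hindep s hsets]
      exact Finset.prod_congr rfl fun i _ => (h2 i).symm
    -- the independent squares
    set X : Fin D → Ω → ℝ := fun j a => (ν j + v j * ω' j a)^2 with hXdef
    have hXmeas : ∀ j, Measurable (X j) := fun j =>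
      ((measurable_const.add (measurable_const.mul (hmeas' j))).pow_const 2)
    have hXindep : iIndepFun X μ := by
      have := hindep'.comp (fun j y => (ν j + v j * y)^2)
        (fun j => (measurable_const.add (measurable_const.mul measurable_id)).pow_const 2)
      exact this
    set m := ∑ j, ((ν j)^2 + (v j)^2) with hmdef
    set s0 := 2 * Real.sqrt (S * x) with hs0def
    set ε := m - s0 with hεdef
    -- integrability
    have hXnn : ∀ j (a : Ω), 0 ≤ X j a := fun j a => sq_nonneg _
    have hsum_meas : Measurable (∑ j, X j) := by
      have : (∑ j, X j) = fun a => ∑ j, X j a := by funext a; simp [Finset.sum_apply]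
      rw [this]
      exact Finset.measurable_sum _ fun j _ => hXmeas j
    have hintX : Integrable (fun a => Real.exp ((-lam) * (∑ j, X j) a)) μ := by
      apply Integrable.mono' (integrable_const (1:ℝ))
      · exact ((hsum_meas.const_mul (-lam)).exp).aestronglyMeasurable
      · apply Filter.Eventually.of_forall
        intro a
        rw [Real.norm_eq_abs, abs_of_pos (Real.exp_pos _)]
        apply Real.exp_le_one_iff.mpr
        have : 0 ≤ (∑ j, X j) a := by
          rw [Finset.sum_apply]
          exact Finset.sum_nonneg fun j _ => hXnn j a
        nlinarith
    -- Chernoff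
    have hcher := measure_le_le_exp_mul_mgf (μ := μ) (X := ∑ j, X j) ε
      (neg_nonpos.mpr hlam.le) hintX
    -- mgf of each factor
    have hmgfj : ∀ j, mgf (X j) μ (-lam)
        = Real.exp (-(lam*(ν j)^2)/(1+2*lam*(v j)^2)) / Real.sqrt (1+2*lam*(v j)^2) := by
      intro j
      have hmap : ∫ a, Real.exp ((-lam) * X j a) ∂μ
          = ∫ y, Real.exp (-(lam * (ν j + v j * y)^2)) ∂(gaussianReal 0 1) := by
        rw [← hlaw' j, integral_map (hmeas' j).aemeasurable]
        · congr 1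
          funext a
          rw [hXdef]
          ring_nf
        · exact (Continuous.aestronglyMeasurable (by fun_prop))
      rw [mgf, hmap, gauss_sq_mgf lam (ν j) (v j) hlam.le]
    -- bound the mgf of the sum
    have hmgfle : mgf (∑ j, X j) μ (-lam) ≤ Real.exp (-lam * m + lam^2 * S) := by
      rw [hXindep.mgf_sum hXmeas Finset.univ]
      calc ∏ j, mgf (X j) μ (-lam)
          ≤ ∏ j, Real.exp (-(lam*((ν j)^2+(v j)^2)) + lam^2*((v j)^4+2*(v j)^2*(ν j)^2)) := by
            apply Finset.prod_le_prod
            · intro j _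
              rw [hmgfj j]
              positivity
            · intro j _
              rw [hmgfj j]
              exact csq_factor_bound lam (ν j) (v j) hlam.le
        _ = Real.exp (∑ j, (-(lam*((ν j)^2+(v j)^2)) + lam^2*((v j)^4+2*(v j)^2*(ν j)^2))) := by
            rw [Real.exp_sum]
        _ = Real.exp (-lam * m + lam^2 * S) := by
            congr 1
            rw [hmdef, hS]
            simp only [Finset.mul_sum, mul_add, ← Finset.sum_neg_distrib,
              ← Finset.sum_add_distrib]
            exact Finset.sum_congr rfl fun j _ => by ring
    -- final numeric bound
    have hlam2 : lam^2 = x / S := Real.sq_sqrt (by positivity)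
    have hlamS : lam^2 * S = x := by rw [hlam2]; field_simp
    have hls : lam * Real.sqrt (S*x) = x := by
      rw [hlamdef, ← Real.sqrt_mul (by positivity)]
      rw [show x/S*(S*x) = x^2 by field_simp]
      exact Real.sqrt_sq hx.le
    have hnum : Real.exp (-(-lam) * ε) * Real.exp (-lam * m + lam^2 * S) ≤ Real.exp (-x) := by
      rw [← Real.exp_add]
      apply Real.exp_le_exp.mpr
      have hkey : -(-lam) * ε + (-lam * m + lam^2*S) = -x := by
        rw [hεdef, hs0def]
        have h1 : -(-lam) * (m - 2*Real.sqrt (S*x)) = lam*m - 2*(lam*Real.sqrt (S*x)) := by ring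
        rw [h1, hls, hlamS]
        ring
      rw [hkey]
    have htoReal : (μ {a | (∑ j, X j) a ≤ ε}).toReal ≤ Real.exp (-x) := by
      refine hcher.trans ?_
      calc Real.exp (-(-lam)*ε) * mgf (∑ j, X j) μ (-lam)
          ≤ Real.exp (-(-lam)*ε) * Real.exp (-lam*m+lam^2*S) :=
            mul_le_mul_of_nonneg_left hmgfle (Real.exp_pos _).le
        _ ≤ Real.exp (-x) := hnum
    have hfin : μ {a | (∑ j, X j) a ≤ ε} ≤ ENNReal.ofReal (Real.exp (-x)) := by
      rw [ENNReal.le_ofReal_iff_toReal_le (measure_ne_top μ _) (Real.exp_nonneg _)]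
      exact htoReal
    have hsetcongr : μ {a | T a - m < -s0} = μ {a | (∑ j, X j) a - m < -s0} := by
      apply measure_congr
      rw [Filter.eventuallyEq_set]
      filter_upwards [ae_all_iff.mpr heq] with a ha
      show (T a - m < -s0) ↔ ((∑ j, X j) a - m < -s0)
      rw [hT a]
      have hsum : ∑ j, (ν j + v j * ω j a)^2 = (∑ j, X j) a := by
        rw [Finset.sum_apply]
        exact Finset.sum_congr rfl fun j _ => by rw [ha j]
      rw [hsum]
    calc μ {a | T a - m < -s0} = μ {a | (∑ j, X j) a - m < -s0} := hsetcongr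
      _ ≤ μ {a | (∑ j, X j) a ≤ ε} := by
          apply measure_mono
          intro a ha
          simp only [Set.mem_setOf_eq] at ha ⊢
          rw [hεdef]
          linarith
      _ ≤ ENNReal.ofReal (Real.exp (-x)) := hfin
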